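/- Let Γ_1,…,Γ_n be Hermitian d×d complex matrices and γ_1,…,γ_n real numbers, let S be the corresponding constraint set, and assume every element of S has trace 1. Let G be a CPTNI map from d×d to d'×d' complex matrices with d' ≥ 2, Z a pinching channel on d'×d' complex matrices, and define f(ρ) = H(Z(G(ρ))) − H(G(ρ)), G_ε(ρ) = (1−ε)·G(ρ) + (ε/d')·I_{d'}, f_ε(ρ) = H(Z(G_ε(ρ))) − H(G_ε(ρ)), and ζ_ε = 2ε(d'−1)·log(d'/(ε(d'−1))). Let ε satisfy 0 < ε ≤ 1/(e·(d'−1)), let ρ ∈ S, and let ∇ be a Hermitian d×d matrix satisfying the subgradient inequality f_ε(σ) ≥ f_ε(ρ) + Re Tr((σ − ρ)ᵀ ∇) for all σ ∈ S. Then for every y ∈ ℝⁿ such that ∇ − Σ_{i=1}^n y_i Γ_iᵀ is positive semidefinite, and for every σ ∈ S, one has f(σ) ≥ f_ε(ρ) − Re Tr(ρᵀ ∇) + Σ_{i=1}^n y_i γ_i − ζ_ε. -/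

import Mathlib

open scoped BigOperators ComplexOrder Matrix

/-- The von Neumann entropy `H(σ) = −Σ λ_i log λ_i` of a Hermitian matrix
(`0` for non-Hermitian matrices; `log` is the natural logarithm, `0 log 0 = 0`). -/
noncomputable def vnEntropy {d : ℕ} (A : Matrix (Fin d) (Fin d) ℂ) : ℝ :=
  if hA : A.IsHermitian then -∑ i, hA.eigenvalues i * Real.log (hA.eigenvalues i) else 0

private lemma negMulLog_add_le {a s : ℝ} (ha : 0 ≤ a) (hs : 0 ≤ s) :
    Real.negMulLog (a + s) ≤ Real.negMulLog a + Real.negMulLog s := by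
  rcases eq_or_lt_of_le ha with rfl | ha'
  · simp
  rcases eq_or_lt_of_le hs with rfl | hs'
  · simp
  have h1 : Real.log a ≤ Real.log (a + s) := Real.log_le_log ha' (by linarith)
  have h2 : Real.log s ≤ Real.log (a + s) := Real.log_le_log hs' (by linarith)
  simp only [Real.negMulLog, neg_mul]
  nlinarith [mul_le_mul_of_nonneg_left h1 ha, mul_le_mul_of_nonneg_left h2 hs]

private lemma negMulLog_monotoneOn :
    MonotoneOn Real.negMulLog (Set.Icc 0 (Real.exp (-1))) := by
  have hI : interior (Set.Icc (0:ℝ) (Real.exp (-1))) = Set.Ioo 0 (Real.exp (-1)) := interior_Icc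
  apply monotoneOn_of_deriv_nonneg (convex_Icc _ _) Real.continuous_negMulLog.continuousOn
  · rw [hI]
    exact fun x hx => (Real.differentiableAt_negMulLog hx.1.ne').differentiableWithinAt
  · rw [hI]
    intro x hx
    rw [Real.deriv_negMulLog hx.1.ne']
    have hlog : Real.log x ≤ -1 := by
      have := Real.log_le_log hx.1 hx.2.le
      simpa [Real.log_exp] using this
    linarith

private lemma add_negMulLog_monotoneOn :
    MonotoneOn (fun t => t + Real.negMulLog t) (Set.Icc (0:ℝ) 1) := by
  have hI : interior (Set.Icc (0:ℝ) 1) = Set.Ioo 0 1 := interior_Icc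
  apply monotoneOn_of_deriv_nonneg (convex_Icc _ _)
    (Continuous.continuousOn (by fun_prop))
  · rw [hI]
    intro x hx
    exact ((differentiableAt_fun_id.add (Real.differentiableAt_negMulLog hx.1.ne'))).differentiableWithinAt
  · rw [hI]
    intro x hx
    have hd : HasDerivAt (fun t => t + Real.negMulLog t) (1 + (-Real.log x - 1)) x :=
      (hasDerivAt_id x).add (Real.hasDerivAt_negMulLog hx.1.ne')
    rw [hd.deriv]
    have : Real.log x ≤ 0 := Real.log_nonpos hx.1.le hx.2.le
    linarith

private lemma negMulLog_diff_le {x x' δ : ℝ} (hx0 : 0 ≤ x) (hx1 : x ≤ 1) (hx'0 : 0 ≤ x')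
    (hx'1 : x' ≤ 1) (hd : |x' - x| ≤ δ) (hδe : δ ≤ Real.exp (-1)) :
    Real.negMulLog x' - Real.negMulLog x ≤ Real.negMulLog δ := by
  have hδ0 : 0 ≤ δ := le_trans (abs_nonneg _) hd
  rcases le_total x x' with h | h
  · have habs : x' - x ≤ δ := by rwa [abs_of_nonneg (sub_nonneg.2 h)] at hd
    have h1 : Real.negMulLog x' ≤ Real.negMulLog x + Real.negMulLog (x' - x) := by
      have := negMulLog_add_le hx0 (sub_nonneg.2 h)
      simpa using this
    have h2 : Real.negMulLog (x' - x) ≤ Real.negMulLog δ :=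
      negMulLog_monotoneOn ⟨sub_nonneg.2 h, le_trans habs hδe⟩ ⟨hδ0, hδe⟩ habs
    linarith
  · have habs : x - x' ≤ δ := by
      rwa [abs_sub_comm, abs_of_nonneg (sub_nonneg.2 h)] at hd
    have hu := add_negMulLog_monotoneOn ⟨hx'0, hx'1⟩ ⟨hx0, hx1⟩ h
    simp only at hu
    have h4 : δ ≤ Real.negMulLog δ := by
      rcases eq_or_lt_of_le hδ0 with rfl | hδ'
      · simp
      · have hlog : Real.log δ ≤ -1 := by
          have := Real.log_le_log hδ' hδe
          simpa [Real.log_exp] using this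
        have : δ * 1 ≤ δ * (-Real.log δ) := by nlinarith
        calc δ = δ * 1 := (mul_one δ).symm
          _ ≤ δ * (-Real.log δ) := this
          _ = Real.negMulLog δ := by simp [Real.negMulLog]
    linarith

private lemma trace_cfc_eq {k : ℕ} {A : Matrix (Fin k) (Fin k) ℂ} (hA : A.IsHermitian)
    (g : ℝ → ℝ) : (cfc g A).trace = ((∑ i, g (hA.eigenvalues i) : ℝ) : ℂ) := by
  rw [hA.cfc_eq g, Matrix.IsHermitian.cfc, Unitary.conjStarAlgAut_apply, Matrix.trace_mul_cycle]
  rw [Unitary.star_mul_self_of_mem (SetLike.coe_mem _), Matrix.one_mul, Matrix.trace_diagonal]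
  push_cast
  rfl

private lemma vnEntropy_eq {k : ℕ} {A : Matrix (Fin k) (Fin k) ℂ} (hA : A.IsHermitian) :
    vnEntropy A = ∑ i, Real.negMulLog (hA.eigenvalues i) := by
  rw [vnEntropy, dif_pos hA]
  simp [Real.negMulLog, neg_mul, Finset.sum_neg_distrib]

private lemma re_trace_eq_sum {k : ℕ} {A : Matrix (Fin k) (Fin k) ℂ} (hA : A.IsHermitian) :
    A.trace.re = ∑ i, hA.eigenvalues i := by
  have h := trace_cfc_eq hA (fun t => t)
  have h2 : cfc (fun t : ℝ => t) A = A := cfc_id' ℝ A hA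
  rw [h2] at h
  rw [h]
  simp

private lemma vnEntropy_affine {k : ℕ} {A : Matrix (Fin k) (Fin k) ℂ} (hA : A.IsHermitian)
    (α β : ℝ) :
    vnEntropy (α • A + β • (1 : Matrix (Fin k) (Fin k) ℂ))
      = ∑ i, Real.negMulLog (α * hA.eigenvalues i + β) := by
  have hsa : IsSelfAdjoint A := hA
  have h1 : cfc (fun t : ℝ => α * t + β) A = α • A + β • (1 : Matrix (Fin k) (Fin k) ℂ) := by
    rw [cfc_add A (α * ·) (fun _ => β) (by fun_prop) (by fun_prop), cfc_const_mul_id α A hsa,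
      cfc_const β A hsa, Algebra.algebraMap_eq_smul_one]
  have hBsa : IsSelfAdjoint (α • A + β • (1 : Matrix (Fin k) (Fin k) ℂ)) := h1 ▸ cfc_predicate _ A
  have hB : (α • A + β • (1 : Matrix (Fin k) (Fin k) ℂ)).IsHermitian := hBsa
  have h3 : cfc Real.negMulLog (α • A + β • (1 : Matrix (Fin k) (Fin k) ℂ))
      = cfc (fun t : ℝ => Real.negMulLog (α * t + β)) A := by
    rw [← h1, ← cfc_comp' Real.negMulLog (fun t : ℝ => α * t + β) A (by fun_prop) (by fun_prop)]
  have h2 := trace_cfc_eq hB Real.negMulLog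
  rw [h3, trace_cfc_eq hA (fun t => Real.negMulLog (α * t + β))] at h2
  have h4 : (∑ i, Real.negMulLog (α * hA.eigenvalues i + β))
      = ∑ i, Real.negMulLog (hB.eigenvalues i) := by exact_mod_cast h2
  rw [vnEntropy_eq hB, h4]

private lemma re_trace_nonneg {k : ℕ} {A : Matrix (Fin k) (Fin k) ℂ} (hA : A.PosSemidef) :
    0 ≤ A.trace.re := by
  rw [re_trace_eq_sum hA.1]
  exact Finset.sum_nonneg fun i _ => hA.eigenvalues_nonneg i

open scoped MatrixOrder in
private lemma re_trace_mul_nonneg {k : ℕ} {A B : Matrix (Fin k) (Fin k) ℂ}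
    (hA : A.PosSemidef) (hB : B.PosSemidef) : 0 ≤ ((A * B).trace).re := by
  have h2 : (CFC.sqrt A * B * CFC.sqrt A).trace = (A * B).trace := by
    rw [Matrix.trace_mul_cycle, CFC.sqrt_mul_sqrt_self A hA.nonneg]
  have h3 : (CFC.sqrt A * B * CFC.sqrt A).PosSemidef := by
    have h := hB.mul_mul_conjTranspose_same (CFC.sqrt A)
    rwa [(Matrix.nonneg_iff_posSemidef.mp (CFC.sqrt_nonneg A)).1.eq] at h
  rw [← h2]
  exact re_trace_nonneg h3

private lemma posSemidef_sum {k : ℕ} {ι : Type*} (s : Finset ι)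
    (f : ι → Matrix (Fin k) (Fin k) ℂ) (h : ∀ i ∈ s, (f i).PosSemidef) :
    (∑ i ∈ s, f i).PosSemidef :=
  Finset.sum_induction f _ (fun _ _ ha hb => ha.add hb) Matrix.PosSemidef.zero h

private lemma entropy_term_bound {x ε Dv δ : ℝ} (h0 : 0 ≤ x) (h1 : x ≤ 1) (hε0 : 0 < ε)
    (hε1 : ε ≤ 1/2) (hD0 : 0 < Dv) (hd1 : 1 ≤ Dv - 1) (hδdef : δ = ε * (Dv - 1) / Dv)
    (hδe : δ ≤ Real.exp (-1)) :
    |Real.negMulLog ((1 - ε) * x + ε / Dv) - Real.negMulLog x| ≤ Real.negMulLog δ := by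
  have hcd0 : 0 ≤ ε / Dv := by positivity
  have hcd1 : ε / Dv ≤ ε := div_le_self hε0.le (by linarith)
  have hcδ : ε / Dv ≤ δ := by
    rw [hδdef]
    gcongr
    nlinarith
  have hy0 : 0 ≤ (1 - ε) * x + ε / Dv := by nlinarith
  have hy1 : (1 - ε) * x + ε / Dv ≤ 1 := by nlinarith
  have hεδ : ε - ε / Dv ≤ δ := by
    have heq : ε - ε / Dv = ε * (Dv - 1) / Dv := by field_simp
    rw [heq, hδdef]
  have hdist : |((1 - ε) * x + ε / Dv) - x| ≤ δ := by
    rw [abs_le]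
    constructor <;> nlinarith
  rw [abs_le]
  constructor
  · have h := negMulLog_diff_le hy0 hy1 h0 h1 (by rwa [abs_sub_comm] at hdist) hδe
    linarith
  · exact negMulLog_diff_le h0 h1 hy0 hy1 hdist hδe

/-- Theorem 2 of the paper. For `ρ` in the constraint set `S` (all of
whose elements have trace 1), a Hermitian `∇` satisfying the subgradient inequality
for the perturbed objective `f_ε` on `S`, and a dual-feasible `y`, every `σ ∈ S`
satisfies `f(σ) ≥ f_ε(ρ) − Re Tr(ρᵀ ∇) + Σ y_i γ_i − ζ_ε`. -/
theorem perturbed_dual_lower_bound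
    {d d' n m p : ℕ} (hd' : 2 ≤ d')
    (Γ : Fin n → Matrix (Fin d) (Fin d) ℂ) (hΓ : ∀ i, (Γ i).IsHermitian)
    (γ : Fin n → ℝ)
    (S : Set (Matrix (Fin d) (Fin d) ℂ))
    (hS : S = {ρ | ρ.PosSemidef ∧ ∀ i, (Γ i * ρ).trace = (γ i : ℂ)})
    (hStrace : ∀ ρ ∈ S, ρ.trace = 1)
    (K : Fin m → Matrix (Fin d') (Fin d) ℂ)
    (hK : ((1 : Matrix (Fin d) (Fin d) ℂ) - ∑ i, (K i)ᴴ * K i).PosSemidef)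
    (G : Matrix (Fin d) (Fin d) ℂ → Matrix (Fin d') (Fin d') ℂ)
    (hG : G = fun X => ∑ i, K i * X * (K i)ᴴ)
    (P : Fin p → Matrix (Fin d') (Fin d') ℂ)
    (hP1 : ∀ j, (P j)ᴴ = P j) (hP2 : ∀ j, P j * P j = P j)
    (hP3 : ∀ j k, j ≠ k → P j * P k = 0)
    (hP4 : ∑ j, P j = 1)
    (Z : Matrix (Fin d') (Fin d') ℂ → Matrix (Fin d') (Fin d') ℂ)
    (hZ : Z = fun X => ∑ j, P j * X * P j)
    (ε : ℝ) (hε0 : 0 < ε) (hεe : ε ≤ 1 / (Real.exp 1 * ((d' : ℝ) - 1)))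
    (f fε : Matrix (Fin d) (Fin d) ℂ → ℝ)
    (hf : f = fun X => vnEntropy (Z (G X)) - vnEntropy (G X))
    (Gε : Matrix (Fin d) (Fin d) ℂ → Matrix (Fin d') (Fin d') ℂ)
    (hGε : Gε = fun X => (1 - ε) • G X + (ε / d') • (1 : Matrix (Fin d') (Fin d') ℂ))
    (hfε : fε = fun X => vnEntropy (Z (Gε X)) - vnEntropy (Gε X))
    (ζ : ℝ) (hζ : ζ = 2 * ε * ((d' : ℝ) - 1) * Real.log ((d' : ℝ) / (ε * ((d' : ℝ) - 1))))
    (ρ : Matrix (Fin d) (Fin d) ℂ) (hρ : ρ ∈ S)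
    (grad : Matrix (Fin d) (Fin d) ℂ) (hgrad : grad.IsHermitian)
    (hsub : ∀ σ ∈ S, fε σ ≥ fε ρ + (((σ - ρ)ᵀ * grad).trace).re)
    (y : Fin n → ℝ)
    (hy : (grad - ∑ i, y i • (Γ i)ᵀ).PosSemidef) :
    ∀ σ ∈ S, f σ ≥ fε ρ - ((ρᵀ * grad).trace).re + ∑ i, y i * γ i - ζ := by
  intro σ hσ
  have hσ' := hσ
  rw [hS] at hσ'
  obtain ⟨hσP, hσC⟩ := hσ'
  -- numeric facts
  have hD2 : (2:ℝ) ≤ (d':ℝ) := by exact_mod_cast hd'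
  have hD0 : (0:ℝ) < (d':ℝ) := by linarith
  have hd1 : (1:ℝ) ≤ (d':ℝ) - 1 := by linarith
  have hE0 : (0:ℝ) < Real.exp 1 := Real.exp_pos 1
  have hE2 : (2:ℝ) ≤ Real.exp 1 := by nlinarith [Real.add_one_le_exp 1]
  have hεd : ε * ((d':ℝ) - 1) ≤ Real.exp (-1) := by
    rw [Real.exp_neg]
    have h := mul_le_mul_of_nonneg_right hεe (by linarith : (0:ℝ) ≤ (d':ℝ) - 1)
    have heq : 1 / (Real.exp 1 * ((d':ℝ) - 1)) * ((d':ℝ) - 1) = (Real.exp 1)⁻¹ := by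
      field_simp
    linarith [heq ▸ h]
  have hexp1 : Real.exp (-1) ≤ 1/2 := by
    rw [Real.exp_neg]
    have := inv_anti₀ (by norm_num : (0:ℝ) < 2) hE2
    simpa [one_div] using this
  have hε1 : ε ≤ 1/2 := by nlinarith
  set δ : ℝ := ε * ((d':ℝ) - 1) / (d':ℝ) with hδdef
  have hδ0 : 0 < δ := by positivity
  have hδe : δ ≤ Real.exp (-1) := by
    have : δ ≤ ε * ((d':ℝ) - 1) := by
      rw [hδdef]
      exact div_le_self (by positivity) (by linarith)
    linarith
  have hcδ : ε / (d':ℝ) ≤ δ := by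
    rw [hδdef]
    gcongr
    nlinarith
  -- positive semidefiniteness
  have hωP : (G σ).PosSemidef := by
    rw [hG]
    exact posSemidef_sum _ _ (fun i _ => hσP.mul_mul_conjTranspose_same (K i))
  have hτP : (Z (G σ)).PosSemidef := by
    rw [hZ]
    show (∑ j, P j * (G σ) * P j).PosSemidef
    refine posSemidef_sum _ _ (fun j _ => ?_)
    have h := hωP.mul_mul_conjTranspose_same (P j)
    rwa [hP1 j] at h
  -- trace bounds
  have hGtr : ((G σ).trace).re ≤ 1 := by
    have hσtr : σ.trace = 1 := hStrace σ hσ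
    have h1 : (G σ).trace = ((∑ i, (K i)ᴴ * K i) * σ).trace := by
      rw [hG]
      show (∑ i, K i * σ * (K i)ᴴ).trace = _
      rw [Matrix.trace_sum]
      have h : ∀ i : Fin m, (K i * σ * (K i)ᴴ).trace = ((K i)ᴴ * K i * σ).trace :=
        fun i => Matrix.trace_mul_cycle (K i) σ (K i)ᴴ
      simp_rw [h]
      rw [← Matrix.trace_sum, ← Finset.sum_mul]
    have h2 : 0 ≤ (((1 - ∑ i, (K i)ᴴ * K i) * σ).trace).re := re_trace_mul_nonneg hK hσP
    have h3 : ((1 - ∑ i, (K i)ᴴ * K i) * σ).trace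
        = σ.trace - ((∑ i, (K i)ᴴ * K i) * σ).trace := by
      rw [Matrix.sub_mul, Matrix.one_mul, Matrix.trace_sub]
    rw [h3, hσtr, Complex.sub_re, Complex.one_re] at h2
    rw [h1]
    linarith
  have hZtr : (Z (G σ)).trace = (G σ).trace := by
    rw [hZ]
    show (∑ j, P j * (G σ) * P j).trace = _
    rw [Matrix.trace_sum]
    have h : ∀ j, (P j * G σ * P j).trace = (P j * G σ).trace := by
      intro j
      rw [Matrix.trace_mul_cycle, hP2 j]
    simp_rw [h]
    rw [← Matrix.trace_sum, ← Finset.sum_mul, hP4, Matrix.one_mul]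
  -- eigenvalue bounds
  have hlam : ∀ i, 0 ≤ hωP.1.eigenvalues i ∧ hωP.1.eigenvalues i ≤ 1 := by
    intro i
    refine ⟨hωP.eigenvalues_nonneg i, ?_⟩
    have hsum : ∑ j, hωP.1.eigenvalues j ≤ 1 := by rw [← re_trace_eq_sum hωP.1]; exact hGtr
    have hle : hωP.1.eigenvalues i ≤ ∑ j, hωP.1.eigenvalues j :=
      Finset.single_le_sum (fun j _ => hωP.eigenvalues_nonneg j) (Finset.mem_univ i)
    linarith
  have hμ : ∀ j, 0 ≤ hτP.1.eigenvalues j ∧ hτP.1.eigenvalues j ≤ 1 := by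
    intro i
    refine ⟨hτP.eigenvalues_nonneg i, ?_⟩
    have htr1 : ((Z (G σ)).trace).re ≤ 1 := by rw [hZtr]; exact hGtr
    have hsum : ∑ j, hτP.1.eigenvalues j ≤ 1 := by rw [← re_trace_eq_sum hτP.1]; exact htr1
    have hle : hτP.1.eigenvalues i ≤ ∑ j, hτP.1.eigenvalues j :=
      Finset.single_le_sum (fun j _ => hτP.eigenvalues_nonneg j) (Finset.mem_univ i)
    linarith
  -- perturbed channel expansions
  have hGεσ : Gε σ = (1 - ε) • G σ + (ε / (d':ℝ)) • (1 : Matrix (Fin d') (Fin d') ℂ) := by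
    rw [hGε]
  have hZGε : Z (Gε σ)
      = (1 - ε) • (Z (G σ)) + (ε / (d':ℝ)) • (1 : Matrix (Fin d') (Fin d') ℂ) := by
    rw [hGεσ, hZ]
    show (∑ j, P j * ((1 - ε) • G σ + (ε / (d':ℝ)) • 1) * P j)
        = (1 - ε) • (∑ j, P j * (G σ) * P j) + (ε / (d':ℝ)) • 1
    calc ∑ j, P j * ((1 - ε) • G σ + (ε / (d':ℝ)) • 1) * P j
        = ∑ j, ((1 - ε) • (P j * G σ * P j) + (ε / (d':ℝ)) • P j) := by
          refine Finset.sum_congr rfl fun j _ => ?_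
          rw [mul_add, add_mul, Matrix.mul_smul, Matrix.smul_mul, Matrix.mul_smul,
            Matrix.smul_mul, mul_one, hP2 j]
      _ = (1 - ε) • (∑ j, P j * G σ * P j) + (ε / (d':ℝ)) • (∑ j, P j) := by
          rw [Finset.sum_add_distrib, Finset.smul_sum, Finset.smul_sum]
      _ = (1 - ε) • (∑ j, P j * G σ * P j)
            + (ε / (d':ℝ)) • (1 : Matrix (Fin d') (Fin d') ℂ) := by rw [hP4]
  -- entropy formulas
  have hε2 : vnEntropy (Z (Gε σ))
      = ∑ j, Real.negMulLog ((1 - ε) * hτP.1.eigenvalues j + ε / (d':ℝ)) := by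
    rw [hZGε]; exact vnEntropy_affine hτP.1 _ _
  have hε3 : vnEntropy (Gε σ)
      = ∑ i, Real.negMulLog ((1 - ε) * hωP.1.eigenvalues i + ε / (d':ℝ)) := by
    rw [hGεσ]; exact vnEntropy_affine hωP.1 _ _
  have hf1 : vnEntropy (Z (G σ)) = ∑ j, Real.negMulLog (hτP.1.eigenvalues j) :=
    vnEntropy_eq hτP.1
  have hf2 : vnEntropy (G σ) = ∑ i, Real.negMulLog (hωP.1.eigenvalues i) := vnEntropy_eq hωP.1
  have hfεσ : fε σ = vnEntropy (Z (Gε σ)) - vnEntropy (Gε σ) := by rw [hfε]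
  have hfσ : f σ = vnEntropy (Z (G σ)) - vnEntropy (G σ) := by rw [hf]
  -- per-term bound
  have hterm : ∀ x : ℝ, 0 ≤ x → x ≤ 1 →
      |Real.negMulLog ((1 - ε) * x + ε / (d':ℝ)) - Real.negMulLog x| ≤ Real.negMulLog δ :=
    fun x h0 h1 => entropy_term_bound h0 h1 hε0 hε1 hD0 hd1 hδdef hδe
  -- the zeta identity
  have hζ2 : 2 * (d':ℝ) * Real.negMulLog δ = ζ := by
    have hx : (0:ℝ) < ε * ((d':ℝ) - 1) := by positivity
    have hlogδ : Real.log δ = Real.log (ε * ((d':ℝ) - 1)) - Real.log (d':ℝ) :=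
      Real.log_div (ne_of_gt hx) (ne_of_gt hD0)
    have hlogz : Real.log ((d':ℝ) / (ε * ((d':ℝ) - 1)))
        = Real.log (d':ℝ) - Real.log (ε * ((d':ℝ) - 1)) :=
      Real.log_div (ne_of_gt hD0) (ne_of_gt hx)
    have hdδ : (d':ℝ) * δ = ε * ((d':ℝ) - 1) := by rw [hδdef]; field_simp
    have hneg : Real.negMulLog δ = -δ * Real.log δ := rfl
    calc 2 * (d':ℝ) * Real.negMulLog δ
        = 2 * ((d':ℝ) * δ) * (-(Real.log δ)) := by rw [hneg]; ring
      _ = 2 * (ε * ((d':ℝ) - 1))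
            * (-(Real.log (ε * ((d':ℝ) - 1)) - Real.log (d':ℝ))) := by rw [hdδ, hlogδ]
      _ = 2 * ε * ((d':ℝ) - 1)
            * (Real.log (d':ℝ) - Real.log (ε * ((d':ℝ) - 1))) := by ring
      _ = ζ := by rw [hζ, hlogz]
  -- perturbation bound
  have hkey : fε σ - f σ ≤ ζ := by
    rw [hfεσ, hfσ, hε2, hε3, hf1, hf2]
    have hb1 : ∑ j, Real.negMulLog ((1 - ε) * hτP.1.eigenvalues j + ε / (d':ℝ))
        - ∑ j, Real.negMulLog (hτP.1.eigenvalues j) ≤ (d':ℝ) * Real.negMulLog δ := by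
      rw [← Finset.sum_sub_distrib]
      calc ∑ j, (Real.negMulLog ((1 - ε) * hτP.1.eigenvalues j + ε / (d':ℝ))
              - Real.negMulLog (hτP.1.eigenvalues j))
          ≤ ∑ _j : Fin d', Real.negMulLog δ :=
            Finset.sum_le_sum fun j _ =>
              le_trans (le_abs_self _) (hterm _ (hμ j).1 (hμ j).2)
        _ = (d':ℝ) * Real.negMulLog δ := by
            rw [Finset.sum_const, Finset.card_univ, Fintype.card_fin, nsmul_eq_mul]
    have hb2 : ∑ i, Real.negMulLog (hωP.1.eigenvalues i)
        - ∑ i, Real.negMulLog ((1 - ε) * hωP.1.eigenvalues i + ε / (d':ℝ))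
        ≤ (d':ℝ) * Real.negMulLog δ := by
      rw [← Finset.sum_sub_distrib]
      calc ∑ i, (Real.negMulLog (hωP.1.eigenvalues i)
              - Real.negMulLog ((1 - ε) * hωP.1.eigenvalues i + ε / (d':ℝ)))
          ≤ ∑ _i : Fin d', Real.negMulLog δ :=
            Finset.sum_le_sum fun i _ => by
              have h := hterm _ (hlam i).1 (hlam i).2
              have h2 := le_abs_self (Real.negMulLog (hωP.1.eigenvalues i)
                - Real.negMulLog ((1 - ε) * hωP.1.eigenvalues i + ε / (d':ℝ)))
              rw [abs_sub_comm] at h2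
              linarith
        _ = (d':ℝ) * Real.negMulLog δ := by
            rw [Finset.sum_const, Finset.card_univ, Fintype.card_fin, nsmul_eq_mul]
    linarith
  -- dual feasibility bound
  have hdual : ∑ i, y i * γ i ≤ ((σᵀ * grad).trace).re := by
    have h0 : 0 ≤ ((σᵀ * (grad - ∑ i, y i • (Γ i)ᵀ)).trace).re :=
      re_trace_mul_nonneg hσP.transpose hy
    have hexp : (σᵀ * (grad - ∑ i, y i • (Γ i)ᵀ)).trace
        = (σᵀ * grad).trace - ((∑ i, y i * γ i : ℝ) : ℂ) := by
      rw [mul_sub, Matrix.trace_sub, Matrix.mul_sum]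
      congr 1
      rw [Matrix.trace_sum]
      have ht : ∀ i : Fin n, (σᵀ * (y i • (Γ i)ᵀ)).trace = ((y i * γ i : ℝ) : ℂ) := by
        intro i
        rw [Matrix.mul_smul, Matrix.trace_smul, ← Matrix.transpose_mul,
          Matrix.trace_transpose, hσC i, Complex.real_smul, ← Complex.ofReal_mul]
      simp_rw [ht]
      rw [Complex.ofReal_sum]
    rw [hexp, Complex.sub_re, Complex.ofReal_re] at h0
    linarith
  -- subgradient inequality
  have hsg := hsub σ hσ
  have htr2 : ((σ - ρ)ᵀ * grad).trace = (σᵀ * grad).trace - (ρᵀ * grad).trace := by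
    rw [Matrix.transpose_sub, Matrix.sub_mul, Matrix.trace_sub]
  rw [htr2, Complex.sub_re] at hsg
  linarith [hkey, hdual, hsg]
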